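/- Let n, k ∈ ℕ and let W be a real n × n skew-symmetric matrix (Wᵀ = −W). Then there exist real n × k matrices Q and P with W = Q Pᵀ − P Qᵀ if and only if rank W ≤ 2k. -/

import Mathlib

open Matrix

lemma vmv_mulVec {n : ℕ} (y x v : Fin n → ℝ) : vecMulVec y x *ᵥ v = (x ⬝ᵥ v) • y := by
  ext l
  simp [vecMulVec, mulVec, dotProduct, Finset.mul_sum, mul_comm, mul_assoc, mul_left_comm]

lemma vmv_transpose {n : ℕ} (y x : Fin n → ℝ) : (vecMulVec y x)ᵀ = vecMulVec x y := by
  ext l m; simp [vecMulVec, mul_comm]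

lemma mat_rank_add_le {n : ℕ} (A B : Matrix (Fin n) (Fin n) ℝ) :
    (A + B).rank ≤ A.rank + B.rank := by
  have hr : LinearMap.range (A + B).mulVecLin ≤
      LinearMap.range A.mulVecLin ⊔ LinearMap.range B.mulVecLin := by
    rintro _ ⟨v, rfl⟩
    rw [mulVecLin_add]
    exact Submodule.add_mem_sup ⟨v, rfl⟩ ⟨v, rfl⟩
  calc (A + B).rank ≤ Module.finrank ℝ
        ↥(LinearMap.range A.mulVecLin ⊔ LinearMap.range B.mulVecLin) :=
        Submodule.finrank_mono hr
    _ ≤ _ := Submodule.finrank_add_le_finrank_add_finrank _ _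

lemma mat_eq_zero_of_rank_zero {n : ℕ} (W : Matrix (Fin n) (Fin n) ℝ) (h : W.rank = 0) :
    W = 0 := by
  have hb : LinearMap.range W.mulVecLin = ⊥ := Submodule.finrank_eq_zero.mp h
  have h0 : W.mulVecLin = 0 := LinearMap.range_eq_bot.mp hb
  ext i j
  have := congrFun (congrFun (congrArg DFunLike.coe h0) (Pi.single j 1)) i
  simpa [mulVecLin_apply, mulVec_single] using this

lemma snoc_mul_transpose {n k : ℕ} (Q' P' : Matrix (Fin n) (Fin k) ℝ) (q p : Fin n → ℝ) :
    (Matrix.of fun l => Fin.snoc (Q' l) (q l)) *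
      (Matrix.of fun l => Fin.snoc (P' l) (p l))ᵀ
      = Q' * P'ᵀ + vecMulVec q p := by
  ext l m
  simp only [Matrix.mul_apply, Matrix.transpose_apply, Matrix.add_apply, Matrix.of_apply,
    vecMulVec_apply]
  rw [Fin.sum_univ_castSucc]
  simp

lemma skew_decomp {n : ℕ} : ∀ (k : ℕ) (W : Matrix (Fin n) (Fin n) ℝ), Wᵀ = -W →
    W.rank ≤ 2 * k → ∃ Q P : Matrix (Fin n) (Fin k) ℝ, W = Q * Pᵀ - P * Qᵀ := by
  intro k
  induction k with
  | zero =>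
    intro W _ hr
    refine ⟨0, 0, ?_⟩
    rw [mat_eq_zero_of_rank_zero W (Nat.le_zero.mp hr)]
    simp
  | succ k ih =>
    intro W hW hr
    by_cases hW0 : W = 0
    · exact ⟨0, 0, by simp [hW0]⟩
    obtain ⟨i, j, hc⟩ : ∃ i j, W i j ≠ 0 := by
      by_contra h
      push_neg at h
      exact hW0 (by ext i j; simp [h])
    set c : ℝ := W i j with hcdef
    have hskew : ∀ a b, W a b = -W b a := fun a b => by
      have := congrFun (congrFun hW b) a
      simpa [Matrix.transpose_apply] using this
    have hdiag : ∀ a, W a a = 0 := fun a => by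
      have := hskew a a; linarith
    set x : Fin n → ℝ := fun l => W l j with hxdef
    set y : Fin n → ℝ := fun l => W l i with hydef
    set W' : Matrix (Fin n) (Fin n) ℝ := W - c⁻¹ • (vecMulVec y x - vecMulVec x y) with hW'def
    have hW'skew : W'ᵀ = -W' := by
      rw [hW'def, Matrix.transpose_sub, Matrix.transpose_smul, Matrix.transpose_sub,
        vmv_transpose, vmv_transpose, hW]
      module
    have hW'v : ∀ v, W' *ᵥ v = W *ᵥ v - c⁻¹ • ((x ⬝ᵥ v) • y - (y ⬝ᵥ v) • x) := by
      intro v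
      rw [hW'def, Matrix.sub_mulVec, Matrix.smul_mulVec, Matrix.sub_mulVec,
        vmv_mulVec, vmv_mulVec]
    have hWej : W *ᵥ Pi.single j 1 = x := by
      rw [mulVec_single]; ext l; simp; rfl
    have hWei : W *ᵥ Pi.single i 1 = y := by
      rw [mulVec_single]; ext l; simp; rfl
    have hker : ∀ v, W *ᵥ v = 0 → W' *ᵥ v = 0 := by
      intro v hv
      have hxv : x ⬝ᵥ v = 0 := by
        have h1 : (Wᵀ *ᵥ v) j = x ⬝ᵥ v := by
          simp [mulVec, dotProduct, transpose_apply]; rfl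
        rw [← h1, hW, neg_mulVec, hv]; simp
      have hyv : y ⬝ᵥ v = 0 := by
        have h1 : (Wᵀ *ᵥ v) i = y ⬝ᵥ v := by
          simp [mulVec, dotProduct, transpose_apply]; rfl
        rw [← h1, hW, neg_mulVec, hv]; simp
      rw [hW'v, hv, hxv, hyv]; simp
    have hkerj : W' *ᵥ Pi.single j 1 = 0 := by
      rw [hW'v, hWej]
      have h1 : x ⬝ᵥ Pi.single j 1 = 0 := by
        simp only [dotProduct_single, mul_one]
        exact hdiag j
      have h2 : y ⬝ᵥ Pi.single j 1 = -c := by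
        simp only [dotProduct_single, mul_one]
        show W j i = -c
        rw [hskew j i, hcdef]
      rw [h1, h2]
      have h3 : (0:ℝ) • y - (-c) • x = c • x := by module
      rw [h3, smul_smul, inv_mul_cancel₀ hc, one_smul, sub_self]
    have hkeri : W' *ᵥ Pi.single i 1 = 0 := by
      rw [hW'v, hWei]
      have h1 : x ⬝ᵥ Pi.single i 1 = c := by
        simp [dotProduct_single]; rfl
      have h2 : y ⬝ᵥ Pi.single i 1 = 0 := by
        simp only [dotProduct_single, mul_one]
        exact hdiag i
      rw [h1, h2]
      have h3 : c • y - (0:ℝ) • x = c • y := by module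
      rw [h3, smul_smul, inv_mul_cancel₀ hc, one_smul, sub_self]
    have hrank' : W'.rank ≤ 2 * k := by
      set N := LinearMap.ker W.mulVecLin with hN
      set K1 := N ⊔ Submodule.span ℝ {Pi.single j (1:ℝ)} with hK1
      set K2 := K1 ⊔ Submodule.span ℝ {Pi.single i (1:ℝ)} with hK2
      have hejN : (Pi.single j 1 : Fin n → ℝ) ∉ N := by
        intro h
        rw [hN, LinearMap.mem_ker, mulVecLin_apply, hWej] at h
        exact hc (congrFun h i)
      have heiK1 : (Pi.single i 1 : Fin n → ℝ) ∉ K1 := by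
        intro h
        rw [hK1] at h
        obtain ⟨v, hv, z, hz, hvz⟩ := Submodule.mem_sup.mp h
        obtain ⟨t, rfl⟩ := Submodule.mem_span_singleton.mp hz
        rw [hN, LinearMap.mem_ker, mulVecLin_apply] at hv
        have happ := congrArg (fun w => W *ᵥ w) hvz
        rw [mulVec_add, hv, zero_add, mulVec_smul, hWej, hWei] at happ
        have ht : t = 0 := by
          have h5 := congrFun happ i
          simp only [Pi.smul_apply, smul_eq_mul] at h5
          have hyi : y i = 0 := hdiag i
          have hxi : x i = c := rfl
          rw [hyi, hxi] at h5
          rcases mul_eq_zero.mp h5 with h6 | h6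
          · exact h6
          · exact absurd h6 hc
        rw [ht, zero_smul] at happ
        have h7 := congrFun happ j
        simp only [Pi.zero_apply] at h7
        have hyj : y j = -c := by show W j i = -c; rw [hskew j i, hcdef]
        rw [hyj] at h7
        exact hc (by linarith)
      have hK2ker : K2 ≤ LinearMap.ker W'.mulVecLin := by
        rw [hK2, hK1]
        refine sup_le (sup_le ?_ ?_) ?_
        · intro v hv
          rw [hN, LinearMap.mem_ker, mulVecLin_apply] at hv
          rw [LinearMap.mem_ker, mulVecLin_apply]
          exact hker v hv
        · rw [Submodule.span_singleton_le_iff_mem, LinearMap.mem_ker, mulVecLin_apply]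
          exact hkerj
        · rw [Submodule.span_singleton_le_iff_mem, LinearMap.mem_ker, mulVecLin_apply]
          exact hkeri
      have h1 : Module.finrank ℝ N < Module.finrank ℝ K1 := by
        apply Submodule.finrank_lt_finrank_of_lt
        refine lt_of_le_of_ne le_sup_left ?_
        intro h
        apply hejN
        rw [h, hK1]
        exact Submodule.mem_sup_right (Submodule.mem_span_singleton_self _)
      have h2 : Module.finrank ℝ K1 < Module.finrank ℝ K2 := by
        apply Submodule.finrank_lt_finrank_of_lt
        refine lt_of_le_of_ne le_sup_left ?_
        intro h
        apply heiK1
        rw [h, hK2]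
        exact Submodule.mem_sup_right (Submodule.mem_span_singleton_self _)
      have h3 : Module.finrank ℝ K2 ≤ Module.finrank ℝ (LinearMap.ker W'.mulVecLin) :=
        Submodule.finrank_mono hK2ker
      have hrn : W.rank + Module.finrank ℝ N = n := by
        have := LinearMap.finrank_range_add_finrank_ker W.mulVecLin
        rwa [Module.finrank_pi, Fintype.card_fin] at this
      have hrn' : W'.rank + Module.finrank ℝ (LinearMap.ker W'.mulVecLin) = n := by
        have := LinearMap.finrank_range_add_finrank_ker W'.mulVecLin
        rwa [Module.finrank_pi, Fintype.card_fin] at this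
      omega
    obtain ⟨Q', P', hQP⟩ := ih W' hW'skew hrank'
    set q : Fin n → ℝ := c⁻¹ • y with hq
    set p : Fin n → ℝ := x with hp
    refine ⟨Matrix.of fun l => Fin.snoc (Q' l) (q l),
            Matrix.of fun l => Fin.snoc (P' l) (p l), ?_⟩
    rw [snoc_mul_transpose, snoc_mul_transpose]
    have hcorr : c⁻¹ • (vecMulVec y x - vecMulVec x y) = vecMulVec q p - vecMulVec p q := by
      ext a b
      simp only [Matrix.smul_apply, Matrix.sub_apply, vecMulVec_apply, smul_eq_mul, hq, hp,
        Pi.smul_apply]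
      ring
    have hWsplit : W = W' + c⁻¹ • (vecMulVec y x - vecMulVec x y) := by
      rw [hW'def]; module
    rw [hWsplit, hQP, hcorr]
    abel

/-- A real skew-symmetric `n × n` matrix `W` can be written as `W = Q Pᵀ − P Qᵀ` for some
real `n × k` matrices `Q`, `P` if and only if `rank W ≤ 2k`. -/
theorem skew_eq_QPt_sub_PQt_iff_rank_le
    (n k : ℕ) (W : Matrix (Fin n) (Fin n) ℝ) (hW : Wᵀ = -W) :
    (∃ Q P : Matrix (Fin n) (Fin k) ℝ, W = Q * Pᵀ - P * Qᵀ) ↔ W.rank ≤ 2 * k := by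
  constructor
  · rintro ⟨Q, P, rfl⟩
    have h1 : Q * Pᵀ - P * Qᵀ = Q * Pᵀ + (-P) * Qᵀ := by
      rw [Matrix.neg_mul]; abel
    rw [h1]
    calc (Q * Pᵀ + (-P) * Qᵀ).rank ≤ (Q * Pᵀ).rank + ((-P) * Qᵀ).rank :=
        mat_rank_add_le _ _
      _ ≤ Q.rank + (-P).rank := add_le_add (rank_mul_le_left _ _) (rank_mul_le_left _ _)
      _ ≤ Fintype.card (Fin k) + Fintype.card (Fin k) :=
        add_le_add (rank_le_card_width _) (rank_le_card_width _)
      _ = 2 * k := by simp [Fintype.card_fin]; ring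
  · exact skew_decomp k W hW
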